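/- arXiv:1801.00457 — 4 statements merged into one kernel-verified Lean document; each statement's English description precedes it below -/
import Mathlib

section
/- Let v > 0 and C^i > 0. The unique solution of the system v·u₀^i − C^i = (1/2)(v√C^j − C^j + v√C^k − C^k), C^j + v√C^j = (1/2)(C^i + v·u₀^i + v√C^k − C^k), C^k + v√C^k = (1/2)(C^i + v·u₀^i + v√C^j − C^j) with C^j, C^k > 0 is C^j = C^k = C^i/2 and u₀^i = C^i/(2v) + √(C^i/2). -/
theorem SUU_at_12_node (v Ci : ℝ) (hv : 0 < v) (hCi : 0 < Ci) :
    ∀ Cj Ck u₀i : ℝ, 0 < Cj → 0 < Ck →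
    ((v * u₀i - Ci =
        (1 / 2) * (v * Real.sqrt Cj - Cj + v * Real.sqrt Ck - Ck) ∧
      Cj + v * Real.sqrt Cj =
        (1 / 2) * (Ci + v * u₀i + v * Real.sqrt Ck - Ck) ∧
      Ck + v * Real.sqrt Ck =
        (1 / 2) * (Ci + v * u₀i + v * Real.sqrt Cj - Cj)) ↔
    (Cj = Ci / 2 ∧ Ck = Ci / 2 ∧
      u₀i = Ci / (2 * v) + Real.sqrt (Ci / 2))) := by
  intro Cj Ck u hCj hCk
  have ha : Real.sqrt Cj ^ 2 = Cj := Real.sq_sqrt hCj.le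
  have hb : Real.sqrt Ck ^ 2 = Ck := Real.sq_sqrt hCk.le
  have ha0 := Real.sqrt_nonneg Cj
  have hb0 := Real.sqrt_nonneg Ck
  constructor
  · rintro ⟨h1, h2, h3⟩
    have key : (Real.sqrt Cj - Real.sqrt Ck) *
        (Real.sqrt Cj + Real.sqrt Ck + 3 * v) = 0 := by
      linear_combination 2 * h2 - 2 * h3 + ha - hb
    have hab : Real.sqrt Cj = Real.sqrt Ck := by
      rcases mul_eq_zero.mp key with h | h
      · linarith
      · linarith
    have hCjk : Cj = Ck := by rw [← ha, ← hb, hab]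
    rw [← hab, ← hCjk] at h1 h2
    have hCj2 : Cj = Ci / 2 := by linarith
    refine ⟨hCj2, hCjk ▸ hCj2, ?_⟩
    have hsq : Real.sqrt Cj = Real.sqrt (Ci / 2) := by rw [hCj2]
    rw [hsq, hCj2] at h1
    have hd : v * (Ci / (2 * v)) = Ci / 2 := by
      field_simp
    have hvu : v * u = v * (Ci / (2 * v) + Real.sqrt (Ci / 2)) := by
      rw [mul_add, hd]; linarith
    exact mul_left_cancel₀ hv.ne' hvu
  · rintro ⟨hj, hk, hu⟩
    subst hj hk hu
    have hd : v * (Ci / (2 * v)) = Ci / 2 := by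
      field_simp
    refine ⟨?_, ?_, ?_⟩ <;> simp only [mul_add, hd] <;> ring
end

section
/- Let v > 0 and C^i > C^j ≥ 0, and set C^k = C^i − C^j. Then the solutions of the S-S-U coupling system at a 1-2 node are u₀^i = √C^k + (C^k + C^i)/(3v) and u₀^j = √C^k + (C^k − C^j)/(3v); moreover the admissibility condition u₀^j < √C^j holds if and only if C^k < C^j, i.e., C^j < C^i < 2C^j. -/
theorem SSU_at_12_node (v Ci Cj : ℝ) (hv : 0 < v) (hCj : 0 ≤ Cj)
    (hCi : Cj < Ci) (Ck : ℝ) (hCk : Ck = Ci - Cj) :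
    (∀ u₀i u₀j : ℝ,
      (v * u₀i - Ci = (1 / 2) * (v * u₀j - Cj + v * Real.sqrt Ck - Ck) ∧
       Cj + v * u₀j = (1 / 2) * (Ci + v * u₀i + v * Real.sqrt Ck - Ck) ∧
       Ck + v * Real.sqrt Ck = (1 / 2) * (Ci + v * u₀i + v * u₀j - Cj)) ↔
      (u₀i = Real.sqrt Ck + (Ck + Ci) / (3 * v) ∧
       u₀j = Real.sqrt Ck + (Ck - Cj) / (3 * v))) ∧
    ((Real.sqrt Ck + (Ck - Cj) / (3 * v) < Real.sqrt Cj ↔ Ck < Cj) ∧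
     (Ck < Cj ↔ (Cj < Ci ∧ Ci < 2 * Cj))) := by
  have hv' : v ≠ 0 := ne_of_gt hv
  subst hCk
  have hCk0 : 0 ≤ Ci - Cj := by linarith
  refine ⟨?_, ?_, ?_⟩
  · intro u₀i u₀j
    constructor
    · rintro ⟨h1, h2, -⟩
      constructor
      · field_simp
        linarith [h1, h2]
      · field_simp
        linarith [h1, h2]
    · rintro ⟨rfl, rfl⟩
      refine ⟨?_, ?_, ?_⟩ <;> field_simp <;> ring
  · constructor
    · intro h
      by_contra hc
      push_neg at hc
      have h1 : Real.sqrt Cj ≤ Real.sqrt (Ci - Cj) := Real.sqrt_le_sqrt hc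
      have h2 : 0 ≤ (Ci - Cj - Cj) / (3 * v) :=
        div_nonneg (by linarith) (by linarith)
      linarith
    · intro h
      have h1 : Real.sqrt (Ci - Cj) < Real.sqrt Cj := Real.sqrt_lt_sqrt hCk0 h
      have h2 : (Ci - Cj - Cj) / (3 * v) < 0 :=
        div_neg_of_neg_of_pos (by linarith) (by linarith)
      linarith
  · constructor <;> intro h
    · exact ⟨hCi, by linarith⟩
    · linarith [h.2]
end

section
/- Let v > 0, C^j, C^k ≥ 0, and set C^i = C^j + C^k. Then u₀^j = −(C^i + C^j)/(3v) − √C^i and u₀^k = −(C^i + C^k)/(3v) − √C^i solve the U-S-S coupling system: −v√C^i − C^i = (1/2)(v·u₀^j − C^j + v·u₀^k − C^k), C^j + v·u₀^j = (1/2)(C^i − v√C^i + v·u₀^k − C^k), C^k + v·u₀^k = (1/2)(C^i − v√C^i + v·u₀^j − C^j). -/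
theorem USS_at_12_node (v Cj Ck : ℝ) (hv : 0 < v) (hCj : 0 ≤ Cj)
    (hCk : 0 ≤ Ck) (Ci : ℝ) (hCi : Ci = Cj + Ck)
    (u₀j u₀k : ℝ)
    (hj : u₀j = -(Ci + Cj) / (3 * v) - Real.sqrt Ci)
    (hk : u₀k = -(Ci + Ck) / (3 * v) - Real.sqrt Ci) :
    (-v * Real.sqrt Ci - Ci = (1 / 2) * (v * u₀j - Cj + v * u₀k - Ck)) ∧
    (Cj + v * u₀j = (1 / 2) * (Ci - v * Real.sqrt Ci + v * u₀k - Ck)) ∧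
    (Ck + v * u₀k = (1 / 2) * (Ci - v * Real.sqrt Ci + v * u₀j - Cj)) := by
  subst hj hk hCi
  have hv' : v ≠ 0 := ne_of_gt hv
  refine ⟨by field_simp; ring, by field_simp; ring, by field_simp; ring⟩
end

section
/- The symmetric kinetic coupling conditions at a 1-2 node, f₁^i = (1/2)(f₁^j + f₁^k), f₂^j = (1/2)(f₂^i + f₁^k), f₂^k = (1/2)(f₂^i + f₁^j), conserve the total kinetic flux, i.e., v₁f₁^i + v₂f₂^i = v₁f₁^j + v₂f₂^j + v₁f₁^k + v₂f₂^k, for all values of (f₁^i, f₂^i, f₁^j, f₂^j, f₁^k, f₂^k), if and only if v₁ = −v₂. -/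
theorem mass_conservation_iff_symmetric_speeds (v₁ v₂ : ℝ)
    (h1 : v₁ < 0) (h2 : 0 < v₂) :
    ((∀ f1i f2i f1j f2j f1k f2k : ℝ,
        (f1i = (1 / 2) * (f1j + f1k) ∧
         f2j = (1 / 2) * (f2i + f1k) ∧
         f2k = (1 / 2) * (f2i + f1j)) →
        v₁ * f1i + v₂ * f2i =
          v₁ * f1j + v₂ * f2j + v₁ * f1k + v₂ * f2k) ↔ v₁ = -v₂) := by
  constructor
  · intro h
    have := h (1/2) 0 1 0 0 (1/2) (by norm_num)
    linarith
  · rintro rfl f1i f2i f1j f2j f1k f2k ⟨h1, h2, h3⟩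
    subst h1 h2 h3
    ring
end
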